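/- Expansion of matrix powers in divided differences: for λ diagonal with entries λ_i, τ arbitrary, and p ≥ 0, [(λ+τ)^p]_{ip'} = λ_i^p δ_{ip'} + Σ_{n=1}^{p} Σ_{m_1,…,m_{n-1}} h_{p−n}(λ_i, λ_{m_1}, …, λ_{m_{n-1}}, λ_{p'}) · τ_{i m_1} ⋯ τ_{m_{n-1} p'}, where h_k is the complete homogeneous symmetric polynomial of degree k. -/

import Mathlib

/-- Complete homogeneous symmetric polynomial `h_k` in the variables `x 0, …, x (m-1)`. -/
noncomputable def hsym {m : ℕ} (k : ℕ) (x : Fin m → ℂ) : ℂ :=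
  ∑ a ∈ Finset.Nat.antidiagonalTuple m k, ∏ j : Fin m, x j ^ a j

/-- Confluent (Hermite) divided difference of a polynomial `f = Σ c_p z^p`:
`f[x_0,…,x_n] = Σ_p c_p h_{p-n}(x_0,…,x_n)`, with the monomial term zero for `n > p`. -/
noncomputable def dd {n : ℕ} (f : Polynomial ℂ) (x : Fin (n + 1) → ℂ) : ℂ :=
  ∑ p ∈ f.support, f.coeff p * (if n ≤ p then hsym (p - n) x else 0)

/-- The index chain `i, m_1, …, m_n, p'`. -/
def chain {N n : ℕ} (i p : Fin N) (m : Fin n → Fin N) : Fin (n + 2) → Fin N :=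
  Fin.cons i (Fin.snoc m p)

lemma hsym_zero {m : ℕ} (x : Fin m → ℂ) : hsym 0 x = 1 := by
  simp [hsym, Finset.Nat.antidiagonalTuple_zero_right]

lemma hsym_one_var (k : ℕ) (x : Fin 1 → ℂ) : hsym k x = x 0 ^ k := by
  simp [hsym, Finset.Nat.antidiagonalTuple_one]

lemma hsym_expand (k m : ℕ) (x : Fin (m+1) → ℂ) :
    hsym k x = ∑ j ∈ Finset.range (k+1), x 0 ^ j * hsym (k-j) (Fin.tail x) := by
  unfold hsym
  simp_rw [Finset.mul_sum]
  rw [Finset.sum_sigma']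
  refine Finset.sum_nbij' (fun a => ⟨a 0, Fin.tail a⟩) (fun s => Fin.cons s.1 s.2) ?_ ?_ ?_ ?_ ?_
  · intro a ha
    rw [Finset.Nat.mem_antidiagonalTuple] at ha
    rw [Fin.sum_univ_succ] at ha
    rw [Finset.mem_sigma, Finset.mem_range, Finset.Nat.mem_antidiagonalTuple]
    have ht : ∑ i : Fin m, Fin.tail a i = ∑ i : Fin m, a i.succ := rfl
    refine ⟨show a 0 < k + 1 by omega, show ∑ i : Fin m, Fin.tail a i = k - a 0 by omega⟩
  · intro s hs
    rw [Finset.mem_sigma, Finset.mem_range, Finset.Nat.mem_antidiagonalTuple] at hs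
    rw [Finset.Nat.mem_antidiagonalTuple, Fin.sum_univ_succ]
    simp only [Fin.cons_zero, Fin.cons_succ]
    omega
  · intro a _
    exact Fin.cons_self_tail a
  · intro s _
    simp
  · intro a _
    rw [Fin.prod_univ_succ]
    rfl

lemma hsym_rec (k m : ℕ) (x : Fin (m+1) → ℂ) :
    hsym (k+1) x = hsym (k+1) (Fin.tail x) + x 0 * hsym k x := by
  rw [hsym_expand (k+1) m x, hsym_expand k m x, Finset.mul_sum, Finset.sum_range_succ']
  simp only [pow_zero, one_mul, Nat.sub_zero]
  rw [add_comm]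
  congr 1
  apply Finset.sum_congr rfl
  intro j hj
  rw [pow_succ, Nat.succ_sub_succ]
  ring

lemma chain_cons {N n : ℕ} (i p' q : Fin N) (m' : Fin n → Fin N) :
    chain i p' (Fin.cons q m') = Fin.cons i (chain q p' m') := by
  unfold chain
  rw [Fin.cons_snoc_eq_snoc_cons q m' p']

/-- Abbreviation for the divided-difference sum. -/
noncomputable def Sfun (N : ℕ) (l : Fin N → ℂ) (τ : Matrix (Fin N) (Fin N) ℂ)
    (p : ℕ) (a b : Fin N) : ℂ :=
  ∑ n ∈ Finset.range p, ∑ m : Fin n → Fin N,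
    hsym (p - (n + 1)) (fun j => l (chain a b m j)) *
      ∏ j : Fin (n + 1), τ (chain a b m j.castSucc) (chain a b m j.succ)

theorem stmt17 (N : ℕ) (l : Fin N → ℂ) (τ : Matrix (Fin N) (Fin N) ℂ)
    (p : ℕ) (i p' : Fin N) :
    ((Matrix.diagonal l + τ) ^ p) i p' =
      l i ^ p * (if i = p' then 1 else 0)
      + ∑ n ∈ Finset.range p, ∑ m : Fin n → Fin N,
          hsym (p - (n + 1)) (fun j => l (chain i p' m j)) *
            ∏ j : Fin (n + 1), τ (chain i p' m j.castSucc) (chain i p' m j.succ) := by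
  induction p generalizing i p' with
  | zero => simp [Matrix.one_apply]
  | succ p ih =>
    have ih' : ∀ a b : Fin N, ((Matrix.diagonal l + τ) ^ p) a b
        = l a ^ p * (if a = b then 1 else 0) + Sfun N l τ p a b := fun a b => ih a b
    have expand : ((Matrix.diagonal l + τ) ^ (p+1)) i p'
        = l i * ((Matrix.diagonal l + τ) ^ p) i p'
          + ∑ q, τ i q * ((Matrix.diagonal l + τ) ^ p) q p' := by
      rw [pow_succ', Matrix.mul_apply]
      simp only [Matrix.add_apply, Matrix.diagonal_apply, add_mul, ite_mul, zero_mul]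
      rw [Finset.sum_add_distrib, Finset.sum_ite_eq]
      simp
    -- pointwise hsym recurrence on the chain
    have hpt : ∀ (n : ℕ) (m : Fin n → Fin N), n < p →
        hsym (p - n) (fun j => l (chain i p' m j)) =
          hsym (p - n) (fun j : Fin (n+1) => l ((Fin.snoc m p' : Fin (n+1) → Fin N) j))
            + l i * hsym (p - (n+1)) (fun j => l (chain i p' m j)) := by
      intro n m hn
      obtain ⟨k, hk⟩ : ∃ k, p - n = k + 1 := ⟨p - (n+1), by omega⟩
      have hk' : p - (n+1) = k := by omega
      rw [hk, hk']
      have h0 : (fun j : Fin (n+2) => l (chain i p' m j)) 0 = l i := by simp [chain]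
      have htl : Fin.tail (fun j : Fin (n+2) => l (chain i p' m j))
          = fun j : Fin (n+1) => l ((Fin.snoc m p' : Fin (n+1) → Fin N) j) := by
        funext j
        simp [Fin.tail, chain]
      rw [hsym_rec k (n+1) (fun j => l (chain i p' m j)), htl]
      have hc0 : chain i p' m 0 = i := by simp [chain]
      rw [hc0]
    -- the top case n = p
    have hpt0 : ∀ (m : Fin p → Fin N),
        hsym (p - p) (fun j => l (chain i p' m j)) =
          hsym (p - p) (fun j : Fin (p+1) => l ((Fin.snoc m p' : Fin (p+1) → Fin N) j)) := by
      intro m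
      rw [Nat.sub_self, hsym_zero, hsym_zero]
    -- reindexing of the "drop-first-variable" sum term n'+1
    have hA : ∀ (n' : ℕ) (q : Fin N) (m' : Fin n' → Fin N),
        hsym (p - (n'+1)) (fun j : Fin (n'+2) => l ((Fin.snoc (Fin.cons q m') p' : Fin (n'+2) → Fin N) j)) *
          ∏ j : Fin (n'+2), τ (chain i p' (Fin.cons q m') j.castSucc)
            (chain i p' (Fin.cons q m') j.succ)
        = τ i q * (hsym (p - (n'+1)) (fun j => l (chain q p' m' j)) *
            ∏ j : Fin (n'+1), τ (chain q p' m' j.castSucc) (chain q p' m' j.succ)) := by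
      intro n' q m'
      have h1 : (fun j : Fin (n'+2) => l ((Fin.snoc (Fin.cons q m') p' : Fin (n'+2) → Fin N) j))
          = fun j => l (chain q p' m' j) := by
        funext j
        rw [show (Fin.snoc (Fin.cons q m') p' : Fin (n'+2) → Fin N) = chain q p' m' from
          (Fin.cons_snoc_eq_snoc_cons q m' p').symm]
      rw [h1, chain_cons, Fin.prod_univ_succ]
      simp only [← Fin.succ_castSucc, Fin.cons_succ, Fin.castSucc_zero, Fin.cons_zero]
      have hc0 : chain q p' m' 0 = q := by simp [chain]
      rw [hc0]
      ring
    -- base term n = 0 of the drop sum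
    have hbase :
        (∑ m : Fin 0 → Fin N,
          hsym (p - 0) (fun j : Fin 1 => l ((Fin.snoc m p' : Fin 1 → Fin N) j)) *
            ∏ j : Fin 1, τ (chain i p' m j.castSucc) (chain i p' m j.succ))
        = ∑ q, τ i q * (l q ^ p * (if q = p' then 1 else 0)) := by
      have h2 : ∀ q : Fin N, τ i q * (l q ^ p * (if q = p' then 1 else 0))
          = if q = p' then τ i q * l q ^ p else 0 := by
        intro q; split <;> simp
      simp_rw [h2]
      rw [Finset.sum_ite_eq' Finset.univ p' (fun q => τ i q * l q ^ p)]
      rw [Fintype.sum_subsingleton _ (fun x : Fin 0 => x.elim0)]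
      rw [hsym_one_var]
      have e1 : (Fin.snoc (fun x : Fin 0 => x.elim0) p' : Fin 1 → Fin N) 0 = p' := by
        simp [Fin.snoc]
      rw [Fin.prod_univ_one]
      have e2 : chain i p' (fun x : Fin 0 => x.elim0) (Fin.castSucc 0) = i := by
        simp [chain]
      have e3 : chain i p' (fun x : Fin 0 => x.elim0) (Fin.succ 0) = p' := by
        simp [chain, Fin.snoc]
      rw [e1, e2, e3]
      simp [Nat.sub_zero]
      ring
    -- term n'+1 of the drop sum
    have hdrop : ∀ n' ∈ Finset.range p,
        (∑ m : Fin (n'+1) → Fin N,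
          hsym (p - (n'+1)) (fun j : Fin (n'+2) => l ((Fin.snoc m p' : Fin (n'+2) → Fin N) j)) *
            ∏ j : Fin (n'+2), τ (chain i p' m j.castSucc) (chain i p' m j.succ))
        = ∑ q, τ i q * (∑ m' : Fin n' → Fin N,
            hsym (p - (n'+1)) (fun j => l (chain q p' m' j)) *
              ∏ j : Fin (n'+1), τ (chain q p' m' j.castSucc) (chain q p' m' j.succ)) := by
      intro n' _
      rw [← Equiv.sum_comp (Fin.consEquiv fun _ : Fin n'.succ => Fin N)
        (fun m => hsym (p - (n'+1)) (fun j : Fin (n'+2) =>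
            l ((Fin.snoc m p' : Fin (n'+2) → Fin N) j)) *
          ∏ j : Fin (n'+2), τ (chain i p' m j.castSucc) (chain i p' m j.succ))]
      rw [Fintype.sum_prod_type]
      refine Finset.sum_congr rfl fun q _ => ?_
      rw [Finset.mul_sum]
      refine Finset.sum_congr rfl fun m' _ => ?_
      exact hA n' q m'
    -- splitting of each term of the big sum
    have hsplitn : ∀ n ∈ Finset.range (p+1),
        (∑ m : Fin n → Fin N, hsym (p - n) (fun j => l (chain i p' m j)) *
            ∏ j : Fin (n + 1), τ (chain i p' m j.castSucc) (chain i p' m j.succ))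
        = (∑ m : Fin n → Fin N,
            hsym (p - n) (fun j : Fin (n+1) => l ((Fin.snoc m p' : Fin (n+1) → Fin N) j)) *
              ∏ j : Fin (n + 1), τ (chain i p' m j.castSucc) (chain i p' m j.succ))
          + (if n < p then ∑ m : Fin n → Fin N,
              (l i * hsym (p - (n+1)) (fun j => l (chain i p' m j))) *
                ∏ j : Fin (n + 1), τ (chain i p' m j.castSucc) (chain i p' m j.succ) else 0) := by
      intro n hn
      by_cases h : n < p
      · rw [if_pos h, ← Finset.sum_add_distrib]
        refine Finset.sum_congr rfl fun m _ => ?_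
        rw [hpt n m h]; ring
      · have hnp : n = p := by rw [Finset.mem_range] at hn; omega
        subst hnp
        rw [if_neg h, add_zero]
        refine Finset.sum_congr rfl fun m _ => ?_
        rw [hpt0 m]
    -- the ite sum equals l i * Sfun
    have hIf : (∑ n ∈ Finset.range (p+1), (if n < p then ∑ m : Fin n → Fin N,
            (l i * hsym (p - (n+1)) (fun j => l (chain i p' m j))) *
              ∏ j : Fin (n + 1), τ (chain i p' m j.castSucc) (chain i p' m j.succ) else 0))
        = l i * Sfun N l τ p i p' := by
      rw [← Finset.sum_subset (Finset.range_subset_range.mpr p.le_succ)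
        (fun x hx hnx => by
          rw [if_neg]
          rw [Finset.mem_range] at hx hnx
          omega)]
      rw [Sfun, Finset.mul_sum]
      refine Finset.sum_congr rfl fun n hn => ?_
      rw [Finset.mem_range] at hn
      rw [if_pos hn, Finset.mul_sum]
      refine Finset.sum_congr rfl fun m _ => ?_
      ring
    have hBig : (∑ n ∈ Finset.range (p+1), ∑ m : Fin n → Fin N,
          hsym (p - n) (fun j => l (chain i p' m j)) *
            ∏ j : Fin (n + 1), τ (chain i p' m j.castSucc) (chain i p' m j.succ))
        = (∑ q, τ i q * (l q ^ p * (if q = p' then 1 else 0)))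
          + ((∑ q, τ i q * Sfun N l τ p q p') + l i * Sfun N l τ p i p') := by
      rw [Finset.sum_congr rfl hsplitn, Finset.sum_add_distrib, hIf,
        Finset.sum_range_succ', hbase, Finset.sum_congr rfl hdrop, Finset.sum_comm]
      have hq : ∀ q : Fin N, (∑ n' ∈ Finset.range p, τ i q * (∑ m' : Fin n' → Fin N,
            hsym (p - (n'+1)) (fun j => l (chain q p' m' j)) *
              ∏ j : Fin (n'+1), τ (chain q p' m' j.castSucc) (chain q p' m' j.succ)))
          = τ i q * Sfun N l τ p q p' := by
        intro q
        rw [Sfun, Finset.mul_sum]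
      rw [Finset.sum_congr rfl (fun q _ => hq q)]
      ring
    rw [expand, ih' i p']
    simp_rw [ih']
    simp only [Nat.add_sub_add_right]
    rw [hBig]
    simp_rw [mul_add]
    rw [Finset.sum_add_distrib]
    ring
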